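/- arXiv:1210.8351 — 5 statements merged into one kernel-verified Lean document; each statement's English description precedes it below -/
import Mathlib

section
/- Let n and d be integers with n ≥ 2d ≥ 2 and let G = C_n(1,2,...,d). Then the maximum cardinality of an independent set of G is α(G) = ⌊n/(d+1)⌋. -/
open MvPolynomial

/-- The circulant graph `C_n(S)` on vertex set `ZMod n`: `i` and `j` are adjacent iff
`min(|i-j|, n-|i-j|) ∈ S`. -/
def circulantGraph (n : ℕ) (S : Set ℕ) : SimpleGraph (ZMod n) :=
  SimpleGraph.fromRel (fun i j => min (i - j).val (n - (i - j).val) ∈ S)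

/-- The edge ideal `I(G)` of a graph `G` in the polynomial ring `k[x_v : v ∈ V]`. -/
noncomputable def edgeIdeal (k : Type*) [Field k] {V : Type*} (G : SimpleGraph V) :
    Ideal (MvPolynomial V k) :=
  Ideal.span {m | ∃ i j, G.Adj i j ∧ m = X i * X j}

/-- The depth of `R/I` for `R = k[x_v : v ∈ V]`: the length of the longest sequence
of elements of `⟨x_v : v ∈ V⟩` forming a regular sequence on `R/I`. -/
noncomputable def quotDepth (k : Type*) [Field k] {V : Type*}
    (I : Ideal (MvPolynomial V k)) : WithBot ℕ∞ :=
  sSup {d : WithBot ℕ∞ | ∃ rs : List (MvPolynomial V k),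
    (∀ r ∈ rs, r ∈ Ideal.span (Set.range (X : V → MvPolynomial V k))) ∧
    RingTheory.Sequence.IsRegular (MvPolynomial V k ⧸ I) rs ∧
    d = rs.length}

/-- `R/I` is Cohen-Macaulay if its Krull dimension equals its depth. -/
def IsCohenMacaulayQuot (k : Type*) [Field k] {V : Type*}
    (I : Ideal (MvPolynomial V k)) : Prop :=
  ringKrullDim (MvPolynomial V k ⧸ I) = quotDepth k I

/-- A set of vertices is independent if no two of its members are adjacent. -/
def IsIndepSet {V : Type*} (G : SimpleGraph V) (s : Set V) : Prop :=
  s.Pairwise (fun u v => ¬ G.Adj u v)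


section CircHelpers

variable {n d : ℕ} [NeZero n]

lemma circ_adj_of {u v : ZMod n} (huv : u ≠ v) (h2 : (v - u).val ≤ d) :
    (circulantGraph n (Set.Icc 1 d)).Adj u v := by
  rw [circulantGraph, SimpleGraph.fromRel_adj]
  refine ⟨huv, Or.inr ?_⟩
  have hne : v - u ≠ 0 := sub_ne_zero.mpr huv.symm
  have h0 : (v - u).val ≠ 0 := fun h => hne ((ZMod.val_eq_zero _).mp h)
  have hlt : (v - u).val < n := ZMod.val_lt _
  rw [Set.mem_Icc]
  constructor
  · exact le_min (by omega) (by omega)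
  · exact le_trans (Nat.min_le_left _ _) h2

lemma circ_not_adj {u v : ZMod n}
    (h1 : d < min (u - v).val (n - (u - v).val))
    (h2 : d < min (v - u).val (n - (v - u).val)) :
    ¬ (circulantGraph n (Set.Icc 1 d)).Adj u v := by
  rw [circulantGraph, SimpleGraph.fromRel_adj]
  rintro ⟨-, h | h⟩ <;> rw [Set.mem_Icc] at h <;> omega

lemma circ_not_adj_mul {q : ℕ} (hd : 1 ≤ d) (hqn : q * (d + 1) ≤ n)
    {k l : ℕ} (hkl : k < l) (hl : l < q) :
    ¬ (circulantGraph n (Set.Icc 1 d)).Adj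
      ((k * (d + 1) : ℕ) : ZMod n) ((l * (d + 1) : ℕ) : ZMod n) := by
  set g : ℕ := (l - k) * (d + 1) with hg
  have hgsub : g = l * (d + 1) - k * (d + 1) := by rw [hg, Nat.sub_mul]
  have hge : d + 1 ≤ g := by
    have : 1 ≤ l - k := by omega
    calc d + 1 = 1 * (d + 1) := (one_mul _).symm
    _ ≤ g := Nat.mul_le_mul_right _ this
  have hle : g + (d + 1) ≤ n := by
    have : (l - k + 1) * (d + 1) ≤ q * (d + 1) := Nat.mul_le_mul_right _ (by omega)
    have h2 : (l - k + 1) * (d + 1) = g + (d + 1) := by rw [hg, Nat.add_mul, one_mul]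
    omega
  have hvu : ((l * (d + 1) : ℕ) : ZMod n) - ((k * (d + 1) : ℕ) : ZMod n)
      = ((g : ℕ) : ZMod n) := by
    rw [hgsub, Nat.cast_sub (Nat.mul_le_mul_right _ hkl.le)]
  have huv : ((k * (d + 1) : ℕ) : ZMod n) - ((l * (d + 1) : ℕ) : ZMod n)
      = ((n - g : ℕ) : ZMod n) := by
    have : ((n - g : ℕ) : ZMod n) + ((g : ℕ) : ZMod n) = ((n : ℕ) : ZMod n) := by
      rw [← Nat.cast_add]; congr 1; omega
    rw [ZMod.natCast_self] at this
    linear_combination -this - hvu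
  have hv1 : (((g : ℕ) : ZMod n)).val = g := ZMod.val_cast_of_lt (by omega)
  have hv2 : (((n - g : ℕ) : ZMod n)).val = n - g := ZMod.val_cast_of_lt (by omega)
  apply circ_not_adj
  · rw [huv, hv2]; omega
  · rw [hvu, hv1]; omega

end CircHelpers

/-- For `n ≥ 2d ≥ 2`, the independence number of `C_n(1,2,…,d)` equals
`⌊n/(d+1)⌋`. -/
theorem circulant_indepNumber (n d : ℕ) (hd : 1 ≤ d) (hn : 2 * d ≤ n) :
    IsGreatest {m : ℕ | ∃ s : Finset (ZMod n),
      IsIndepSet (circulantGraph n (Set.Icc 1 d)) ↑s ∧ s.card = m} (n / (d + 1)) := by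
  haveI : NeZero n := ⟨by omega⟩
  set q := n / (d + 1) with hq
  have hqn : q * (d + 1) ≤ n := Nat.div_mul_le_self n (d + 1)
  constructor
  · -- membership: exhibit an independent set of size q
    refine ⟨(Finset.range q).image (fun k => ((k * (d + 1) : ℕ) : ZMod n)), ?_, ?_⟩
    · intro u hu v hv hne
      simp only [Finset.coe_image, Set.mem_image, Finset.coe_range, Set.mem_Iio] at hu hv
      obtain ⟨k, hk, rfl⟩ := hu
      obtain ⟨l, hl, rfl⟩ := hv
      rcases lt_trichotomy k l with h | h | h
      · exact circ_not_adj_mul hd hqn h hl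
      · exact absurd (by rw [h]) hne
      · intro hadj
        exact circ_not_adj_mul hd hqn h hk hadj.symm
    · rw [Finset.card_image_of_injOn, Finset.card_range]
      intro k hk l hl h
      simp only [Finset.coe_range, Set.mem_Iio] at hk hl
      have hkd : k * (d + 1) < n := by
        have : (k + 1) * (d + 1) ≤ q * (d + 1) := Nat.mul_le_mul_right _ hk
        have h2 : (k + 1) * (d + 1) = k * (d + 1) + (d + 1) := by ring
        omega
      have hld : l * (d + 1) < n := by
        have : (l + 1) * (d + 1) ≤ q * (d + 1) := Nat.mul_le_mul_right _ hl
        have h2 : (l + 1) * (d + 1) = l * (d + 1) + (d + 1) := by ring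
        omega
      have := congrArg ZMod.val h
      rw [ZMod.val_cast_of_lt hkd, ZMod.val_cast_of_lt hld] at this
      exact Nat.eq_of_mul_eq_mul_right (by omega) this
  · -- upper bound
    rintro m ⟨s, hs, rfl⟩
    rw [hq, Nat.le_div_iff_mul_le (by omega)]
    have hinj : Set.InjOn (fun p : ZMod n × ℕ => p.1 + (p.2 : ZMod n))
        ↑(s ×ˢ Finset.range (d + 1)) := by
      rintro ⟨a, i⟩ hai ⟨b, j⟩ hbj h
      simp only [Finset.coe_product, Set.mem_prod, Finset.mem_coe, Finset.coe_range,
        Set.mem_Iio] at hai hbj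
      obtain ⟨ha, hi⟩ := hai
      obtain ⟨hb, hj⟩ := hbj
      simp only at h
      by_cases hab : a = b
      · subst hab
        have hij : (i : ZMod n) = (j : ZMod n) := by linear_combination h
        have := congrArg ZMod.val hij
        rw [ZMod.val_cast_of_lt (by omega), ZMod.val_cast_of_lt (by omega)] at this
        simp [Prod.ext_iff, this]
      · exfalso
        rcases le_total i j with hij | hij
        · -- a - b = j - i
          have hsub : a - b = ((j - i : ℕ) : ZMod n) := by
            rw [Nat.cast_sub hij]; linear_combination h
          have hji : i ≠ j := by
            intro hh; subst hh
            exact hab (by linear_combination h)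
          refine hs ha hb hab (circ_adj_of (Ne.symm hab) ?_).symm
          rw [hsub, ZMod.val_cast_of_lt (by omega)]; omega
        · have hsub : b - a = ((i - j : ℕ) : ZMod n) := by
            rw [Nat.cast_sub hij]; linear_combination -h
          refine hs ha hb hab (circ_adj_of hab ?_)
          rw [hsub, ZMod.val_cast_of_lt (by omega)]; omega
    calc s.card * (d + 1) = (s ×ˢ Finset.range (d + 1)).card := by
          rw [Finset.card_product, Finset.card_range]
    _ = ((s ×ˢ Finset.range (d + 1)).image (fun p : ZMod n × ℕ => p.1 + (p.2 : ℕ))).card :=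
          (Finset.card_image_of_injOn hinj).symm
    _ ≤ (Finset.univ : Finset (ZMod n)).card := Finset.card_le_univ _
    _ = n := by rw [Finset.card_univ, ZMod.card]
end

section
/- Let n and d be integers with n ≥ 2d ≥ 2 and let G = C_n(1,2,...,d). For every integer k with 0 ≤ k ≤ ⌊n/(d+1)⌋, the number N_k of independent sets of G with exactly k vertices satisfies (n − dk)·N_k = n·binomial(n − dk, k). -/
open MvPolynomial

def SFin (d m j : ℕ) : Finset (Finset ℕ) :=
  (Finset.range m).powerset.filter
    (fun A => A.card = j ∧ ∀ x ∈ A, ∀ y ∈ A, x < y → x + d < y)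

lemma mem_SFin {d m j : ℕ} {A : Finset ℕ} :
    A ∈ SFin d m j ↔ (∀ x ∈ A, x < m) ∧ A.card = j ∧
      ∀ x ∈ A, ∀ y ∈ A, x < y → x + d < y := by
  simp [SFin, Finset.subset_iff, Finset.mem_range]

lemma SFin_card_zero (d m : ℕ) : (SFin d m 0).card = 1 := by
  have : SFin d m 0 = {∅} := by
    ext A
    simp only [mem_SFin, Finset.mem_singleton, Finset.card_eq_zero]
    constructor
    · rintro ⟨-, h, -⟩; exact h
    · rintro rfl; simp
  rw [this]; simp

lemma choose_aux (d m j' : ℕ) :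
    (m - d * j').choose (j' + 1) + ((m - d) - d * (j' - 1)).choose j'
      = (m + 1 - d * j').choose (j' + 1) := by
  cases j' with
  | zero => simp
  | succ k =>
    by_cases h : d * (k + 1) ≤ m
    · have e : d * (k + 1) = d * k + d := by ring
      have e2 : d * (k + 1 - 1) = d * k := by simp
      have h1 : (m - d) - d * (k + 1 - 1) = m - d * (k + 1) := by omega
      have h2 : m + 1 - d * (k + 1) = (m - d * (k + 1)) + 1 := by omega
      rw [h1, h2, Nat.choose_succ_succ (m - d * (k+1)) (k+1)]
      ring
    · push_neg at h
      have h1 : m - d * (k + 1) = 0 := by omega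
      have h2 : m + 1 - d * (k + 1) = 0 ∨ m + 1 - d * (k+1) = 1 := by omega
      have e : d * (k + 1) = d * k + d := by ring
      have e2 : d * (k + 1 - 1) = d * k := by simp
      have h3 : (m - d) - d * (k + 1 - 1) ≤ k := by omega
      rw [h1]
      rw [Nat.choose_eq_zero_of_lt (by omega : 0 < k + 1 + 1)]
      rw [Nat.choose_eq_zero_of_lt (by omega : (m-d) - d*(k+1-1) < k + 1)]
      rcases h2 with h2 | h2 <;> rw [h2] <;>
        simp [Nat.choose_eq_zero_of_lt]

lemma SFin_split (d m j' : ℕ) :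
    SFin d (m + 1) (j' + 1)
      = SFin d m (j' + 1) ∪ (SFin d (m - d) j').image (insert m) := by
  ext A
  simp only [Finset.mem_union, Finset.mem_image, mem_SFin]
  constructor
  · rintro ⟨hsub, hcard, hsp⟩
    by_cases hm : m ∈ A
    · right
      refine ⟨A.erase m, ⟨?_, ?_, ?_⟩, ?_⟩
      · intro x hx
        have hx' := Finset.mem_of_mem_erase hx
        have hne := Finset.ne_of_mem_erase hx
        have := hsp x hx' m hm (by have := hsub x hx'; omega)
        omega
      · rw [Finset.card_erase_of_mem hm, hcard]; omega
      · intro x hx y hy hxy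
        exact hsp x (Finset.mem_of_mem_erase hx) y (Finset.mem_of_mem_erase hy) hxy
      · exact Finset.insert_erase hm
    · left
      exact ⟨fun x hx => by have := hsub x hx; have : x ≠ m := fun h => hm (h ▸ hx); omega,
        hcard, hsp⟩
  · rintro (⟨hsub, hcard, hsp⟩ | ⟨B, ⟨hsub, hcard, hsp⟩, rfl⟩)
    · exact ⟨fun x hx => by have := hsub x hx; omega, hcard, hsp⟩
    · have hmB : m ∉ B := fun h => by have := hsub m h; omega
      refine ⟨?_, ?_, ?_⟩
      · intro x hx
        rcases Finset.mem_insert.1 hx with rfl | hx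
        · omega
        · have := hsub x hx; omega
      · rw [Finset.card_insert_of_notMem hmB, hcard]
      · intro x hx y hy hxy
        rcases Finset.mem_insert.1 hx with hx1 | hx1 <;>
          rcases Finset.mem_insert.1 hy with hy1 | hy1
        · omega
        · have := hsub y hy1; omega
        · have := hsub x hx1; omega
        · exact hsp x hx1 y hy1 hxy

lemma SFin_card (d : ℕ) : ∀ m j, (SFin d m j).card = (m - d * (j - 1)).choose j := by
  intro m
  induction m using Nat.strong_induction_on with
  | _ m ih =>
    intro j
    cases j with
    | zero => simpa using SFin_card_zero d m
    | succ j' =>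
      cases m with
      | zero =>
        have : SFin d 0 (j' + 1) = ∅ := by
          ext A
          simp only [mem_SFin, Finset.notMem_empty, iff_false]
          rintro ⟨hsub, hcard, -⟩
          have : A = ∅ := Finset.eq_empty_of_forall_notMem
            (fun x hx => by have := hsub x hx; omega)
          rw [this] at hcard; simp at hcard
        rw [this]
        simp [Nat.choose_eq_zero_of_lt]
      | succ m =>
        rw [SFin_split]
        have hdisj : Disjoint (SFin d m (j' + 1)) ((SFin d (m - d) j').image (insert m)) := by
          rw [Finset.disjoint_left]
          intro A hA hA2
          obtain ⟨B, hB, rfl⟩ := Finset.mem_image.1 hA2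
          have := (mem_SFin.1 hA).1 m (Finset.mem_insert_self m B)
          omega
        rw [Finset.card_union_of_disjoint hdisj,
          Finset.card_image_of_injOn (fun A hA B hB h => by
            have hmA : m ∉ A := fun hx => by have := (mem_SFin.1 hA).1 m hx; omega
            have hmB : m ∉ B := fun hx => by have := (mem_SFin.1 hB).1 m hx; omega
            have : (insert m A).erase m = (insert m B).erase m := by rw [h]
            rwa [Finset.erase_insert hmA, Finset.erase_insert hmB] at this),
          ih m (by omega) (j' + 1), ih (m - d) (by omega) j']
        simpa using choose_aux d m j'

section ZModLemmas

variable {n : ℕ} [NeZero n]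

lemma val_sub_add_val_sub {x y : ZMod n} (hxy : x ≠ y) :
    (y - x).val = n - (x - y).val ∧ 0 < (x - y).val ∧ (x - y).val < n := by
  have h1 : (x - y) ≠ 0 := sub_ne_zero_of_ne hxy
  have h2 : (y - x) ≠ 0 := sub_ne_zero_of_ne (Ne.symm hxy)
  have v1 : (x - y).val ≠ 0 := fun h => h1 ((ZMod.val_eq_zero _).1 h)
  have v2 : (y - x).val ≠ 0 := fun h => h2 ((ZMod.val_eq_zero _).1 h)
  have l1 : (x - y).val < n := ZMod.val_lt _
  have l2 : (y - x).val < n := ZMod.val_lt _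
  haveI : NeZero (x - y) := ⟨h1⟩
  have hv : (y - x).val = n - (x - y).val := by
    rw [show y - x = -(x - y) by ring, ZMod.val_neg_of_ne_zero]
  omega

lemma cast_sub_val {a b : ℕ} (h : b ≤ a) (ha : a < n) :
    ((a : ZMod n) - (b : ZMod n)).val = a - b := by
  rw [← Nat.cast_sub h, ZMod.val_cast_of_lt (by omega)]

end ZModLemmas

section IndepChar

lemma indep_iff {n d : ℕ} [NeZero n] (s : Finset (ZMod n)) :
    IsIndepSet (circulantGraph n (Set.Icc 1 d)) ↑s ↔
      ∀ x ∈ s, ∀ y ∈ s, x ≠ y → d < (x - y).val ∧ (x - y).val < n - d := by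
  constructor
  · intro h x hx y hy hxy
    have h2 := h (Finset.mem_coe.2 hx) (Finset.mem_coe.2 hy) hxy
    rw [circulantGraph, SimpleGraph.fromRel_adj] at h2
    push_neg at h2
    have h3 := h2 hxy
    simp only [Set.mem_Icc, not_and, not_le, not_or] at h3
    obtain ⟨hv, h0, hlt⟩ := val_sub_add_val_sub hxy
    obtain ⟨h4, h5⟩ := h3
    rw [hv] at h5
    omega
  · intro h x hx y hy hxy
    rw [circulantGraph, SimpleGraph.fromRel_adj]
    push_neg
    intro _
    obtain ⟨ha, hb⟩ := h x (Finset.mem_coe.1 hx) y (Finset.mem_coe.1 hy) hxy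
    obtain ⟨hv, h0, hlt⟩ := val_sub_add_val_sub hxy
    simp only [Set.mem_Icc, not_and, not_le]
    constructor
    · intro; omega
    · rw [hv]; intro; omega

end IndepChar

section Counting

variable (n d j : ℕ) [NeZero n]

def IFin : Finset (Finset (ZMod n)) :=
  Finset.univ.filter (fun s =>
    (∀ x ∈ s, ∀ y ∈ s, x ≠ y → d < (x - y).val ∧ (x - y).val < n - d) ∧ s.card = j)

open Classical in
noncomputable def PFin : Finset (ZMod n × Finset (ZMod n)) :=
  (Finset.univ ×ˢ IFin n d j).filter
    (fun p => ∀ x ∈ p.2, ∀ a ∈ Finset.Icc 1 d, p.1 ≠ x + (a : ZMod n))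

variable {n d j}

lemma mem_IFin {s : Finset (ZMod n)} :
    s ∈ IFin n d j ↔
      (∀ x ∈ s, ∀ y ∈ s, x ≠ y → d < (x - y).val ∧ (x - y).val < n - d) ∧ s.card = j := by
  simp [IFin]

lemma mem_PFin {p : ZMod n × Finset (ZMod n)} :
    p ∈ PFin n d j ↔ p.2 ∈ IFin n d j ∧
      ∀ x ∈ p.2, ∀ a ∈ Finset.Icc 1 d, p.1 ≠ x + (a : ZMod n) := by
  simp [PFin, Finset.mem_product]

variable (hd : 1 ≤ d) (hn : 2 * d ≤ n)
include hd hn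

open Classical in
lemma fiber_snd {s : Finset (ZMod n)} (hs : s ∈ IFin n d j) :
    (Finset.univ.filter
      (fun v : ZMod n => ∀ x ∈ s, ∀ a ∈ Finset.Icc 1 d, v ≠ x + (a : ZMod n))).card
      = n - d * j := by
  obtain ⟨hsp, hcard⟩ := mem_IFin.1 hs
  have hdn : d < n := by omega
  set F : ZMod n → Finset (ZMod n) :=
    fun x => (Finset.Icc 1 d).image (fun a : ℕ => x + (a : ZMod n)) with hF
  have heq : Finset.univ.filter
      (fun v : ZMod n => ∀ x ∈ s, ∀ a ∈ Finset.Icc 1 d, v ≠ x + (a : ZMod n))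
      = Finset.univ \ s.biUnion F := by
    ext v
    simp only [Finset.mem_filter, Finset.mem_univ, true_and, Finset.mem_sdiff,
      Finset.mem_biUnion, Finset.mem_image, hF, not_exists, not_and]
    constructor
    · intro h x hx a ha hav
      exact h x hx a ha hav.symm
    · intro h x hx a ha hav
      exact h x hx a ha hav.symm
  rw [heq, Finset.card_sdiff_of_subset (Finset.subset_univ _), Finset.card_univ, ZMod.card]
  have hdisj : ∀ x ∈ s, ∀ y ∈ s, x ≠ y → Disjoint (F x) (F y) := by
    intro x hx y hy hxy
    rw [Finset.disjoint_left]
    intro z hzx hzy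
    obtain ⟨a, ha, rfl⟩ := Finset.mem_image.1 hzx
    obtain ⟨b, hb, hba⟩ := Finset.mem_image.1 hzy
    rw [Finset.mem_Icc] at ha hb
    rcases le_total a b with hab | hab
    · have h5 : x - y = (b : ZMod n) - (a : ZMod n) := by linear_combination hba.symm
      have h6 : (x - y).val = b - a := by rw [h5, cast_sub_val hab (by omega)]
      have := (hsp x hx y hy hxy).1
      omega
    · have h5 : y - x = (a : ZMod n) - (b : ZMod n) := by linear_combination hba
      have h6 : (y - x).val = a - b := by rw [h5, cast_sub_val hab (by omega)]
      have := (hsp y hy x hx (Ne.symm hxy)).1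
      omega
  rw [Finset.card_biUnion hdisj]
  have hcardF : ∀ x ∈ s, (F x).card = d := by
    intro x hx
    rw [hF]
    rw [Finset.card_image_of_injOn, Nat.card_Icc]
    · omega
    · intro a ha b hb hab
      simp only [Finset.coe_Icc, Set.mem_Icc] at ha hb
      have : ((a : ℕ) : ZMod n) = (b : ZMod n) := by
        have := add_left_cancel hab
        exact this
      have := congrArg ZMod.val this
      rwa [ZMod.val_cast_of_lt (by omega), ZMod.val_cast_of_lt (by omega)] at this
  rw [Finset.sum_congr rfl hcardF, Finset.sum_const, hcard, smul_eq_mul]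
  ring_nf

open Classical in
lemma card_PFin_eq_left :
    (PFin n d j).card = (IFin n d j).card * (n - d * j) := by
  rw [Finset.card_eq_sum_card_fiberwise (f := Prod.snd) (t := IFin n d j)
    (fun p hp => (mem_PFin.1 hp).1)]
  rw [Finset.sum_congr rfl (fun s hs => ?_), Finset.sum_const, smul_eq_mul]
  have key : ((PFin n d j).filter (fun p => p.2 = s)).card
      = (Finset.univ.filter
        (fun v : ZMod n => ∀ x ∈ s, ∀ a ∈ Finset.Icc 1 d, v ≠ x + (a : ZMod n))).card := by
    refine Finset.card_bij' (fun p _ => p.1) (fun v _ => (v, s)) ?_ ?_ ?_ ?_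
    · intro p hp
      obtain ⟨hp1, hp2⟩ := Finset.mem_filter.1 hp
      obtain ⟨-, hav⟩ := mem_PFin.1 hp1
      simp only [Finset.mem_filter, Finset.mem_univ, true_and]
      intro x hx a ha
      exact hav x (by rw [hp2]; exact hx) a ha
    · intro v hv
      simp only [Finset.mem_filter, Finset.mem_univ, true_and] at hv
      exact Finset.mem_filter.2 ⟨mem_PFin.2 ⟨hs, hv⟩, rfl⟩
    · intro p hp
      obtain ⟨hp1, hp2⟩ := Finset.mem_filter.1 hp
      show (p.1, s) = p
      rw [← hp2]
    · intro v hv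
      rfl
  rw [key, fiber_snd hd hn hs]

end Counting

section Counting2

variable {n d j : ℕ} [NeZero n] (hd : 1 ≤ d) (hn : 2 * d ≤ n)
include hd hn

lemma fiber_fst (v : ZMod n) :
    ((PFin n d j).filter (fun p => p.1 = v)).card = (SFin d (n - d) j).card := by
  have hdn : d < n := by omega
  have h0n : 0 < n := by omega
  refine Finset.card_bij'
    (fun p _ => p.2.image (fun x => (x - v).val))
    (fun A _ => (v, A.image (fun t : ℕ => v + (t : ZMod n)))) ?_ ?_ ?_ ?_
  · -- hi : image lands in SFin
    intro p hp
    obtain ⟨hp1, hp2⟩ := Finset.mem_filter.1 hp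
    obtain ⟨hI, hav⟩ := mem_PFin.1 hp1
    obtain ⟨hsp, hcard⟩ := mem_IFin.1 hI
    subst hp2
    rw [mem_SFin]
    refine ⟨?_, ?_, ?_⟩
    · -- bound
      intro t ht
      obtain ⟨x, hx, rfl⟩ := Finset.mem_image.1 ht
      by_contra hge
      push_neg at hge
      have hlt : (x - p.1).val < n := ZMod.val_lt _
      have hxv : (((x - p.1).val : ℕ) : ZMod n) = x - p.1 := ZMod.natCast_zmod_val _
      have hkey : x + ((n - (x - p.1).val : ℕ) : ZMod n) = p.1 := by
        rw [Nat.cast_sub hlt.le, ZMod.natCast_self, hxv]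
        ring
      exact hav x hx (n - (x - p.1).val)
        (Finset.mem_Icc.2 ⟨by omega, by omega⟩) hkey.symm
    · -- card
      rw [Finset.card_image_of_injOn, hcard]
      intro x _ y _ hxy
      have hxy' : (x - p.1).val = (y - p.1).val := hxy
      have : x - p.1 = y - p.1 := by
        rw [← ZMod.natCast_zmod_val (x - p.1), ← ZMod.natCast_zmod_val (y - p.1), hxy']
      exact sub_left_injective this
    · -- sparse
      intro a ha b hb hab
      obtain ⟨x, hx, rfl⟩ := Finset.mem_image.1 ha
      obtain ⟨y, hy, rfl⟩ := Finset.mem_image.1 hb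
      have hxy : x ≠ y := by rintro rfl; exact absurd hab (lt_irrefl _)
      have hyx : y - x = ((((y - p.1).val : ℕ) : ZMod n) - (((x - p.1).val : ℕ) : ZMod n)) := by
        rw [ZMod.natCast_zmod_val, ZMod.natCast_zmod_val]; ring
      have hval : (y - x).val = (y - p.1).val - (x - p.1).val := by
        rw [hyx, cast_sub_val hab.le (ZMod.val_lt _)]
      have := (hsp y hy x hx (Ne.symm hxy)).1
      omega
  · -- hj : cast-back lands in the fiber
    intro A hA
    obtain ⟨hbd, hcard, hsp⟩ := mem_SFin.1 hA
    refine Finset.mem_filter.2 ⟨mem_PFin.2 ⟨mem_IFin.2 ⟨?_, ?_⟩, ?_⟩, rfl⟩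
    · -- indep condition
      intro x hx y hy hxy
      obtain ⟨a, ha, rfl⟩ := Finset.mem_image.1 hx
      obtain ⟨b, hb, rfl⟩ := Finset.mem_image.1 hy
      have hane : a ≠ b := by rintro rfl; exact hxy rfl
      have ha' := hbd a ha
      have hb' := hbd b hb
      rcases lt_or_gt_of_ne hane with hab | hab
      · -- a < b
        have hyx : (v + (b : ZMod n)) - (v + (a : ZMod n))
            = ((b : ZMod n) - (a : ZMod n)) := by ring
        have hval : ((v + (b : ZMod n)) - (v + (a : ZMod n))).val = b - a := by
          rw [hyx, cast_sub_val hab.le (by omega)]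
        have hd2 := hsp a ha b hb hab
        obtain ⟨hveq, hpos, hlt⟩ := val_sub_add_val_sub hxy
        rw [hval] at hveq
        constructor <;> omega
      · -- b < a
        have hyx : (v + (a : ZMod n)) - (v + (b : ZMod n))
            = ((a : ZMod n) - (b : ZMod n)) := by ring
        have hval : ((v + (a : ZMod n)) - (v + (b : ZMod n))).val = a - b := by
          rw [hyx, cast_sub_val hab.le (by omega)]
        have hd2 := hsp b hb a ha hab
        rw [hval]
        omega
    · -- card
      rw [Finset.card_image_of_injOn, hcard]
      intro t1 h1 t2 h2 h12
      have h1' := hbd t1 (by simpa using h1)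
      have h2' := hbd t2 (by simpa using h2)
      have : ((t1 : ℕ) : ZMod n) = ((t2 : ℕ) : ZMod n) := add_left_cancel h12
      have := congrArg ZMod.val this
      rwa [ZMod.val_cast_of_lt (by omega), ZMod.val_cast_of_lt (by omega)] at this
    · -- avoid condition
      intro x hx a ha heq
      obtain ⟨t, ht, rfl⟩ := Finset.mem_image.1 hx
      rw [Finset.mem_Icc] at ha
      have ht' := hbd t ht
      have : ((t + a : ℕ) : ZMod n) = 0 := by
        push_cast
        linear_combination -heq
      have hdvd := (ZMod.natCast_eq_zero_iff _ n).1 this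
      have := Nat.le_of_dvd (by omega) hdvd
      omega
  · -- left inverse
    intro p hp
    obtain ⟨hp1, hp2⟩ := Finset.mem_filter.1 hp
    subst hp2
    show (p.1, (p.2.image (fun x => (x - p.1).val)).image (fun t : ℕ => p.1 + (t : ZMod n))) = p
    have himg : (p.2.image (fun x => (x - p.1).val)).image (fun t : ℕ => p.1 + (t : ZMod n))
        = p.2 := by
      rw [Finset.image_image]
      have heqon : ∀ x ∈ p.2,
          ((fun t : ℕ => p.1 + (t : ZMod n)) ∘ fun x : ZMod n => (x - p.1).val) x = x := by
        intro x _
        simp only [Function.comp_apply]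
        rw [ZMod.natCast_zmod_val]
        ring
      rw [Finset.image_congr (fun x hx => heqon x hx), Finset.image_id']
    rw [himg]
  · -- right inverse
    intro A hA
    obtain ⟨hbd, -, -⟩ := mem_SFin.1 hA
    show Finset.image _ (Finset.image _ A) = A
    rw [Finset.image_image]
    have : ∀ t ∈ A, ((fun x : ZMod n => (x - v).val) ∘ fun t : ℕ => v + (t : ZMod n)) t = t := by
      intro t ht
      simp only [Function.comp_apply, add_sub_cancel_left]
      exact ZMod.val_cast_of_lt (by have := hbd t ht; omega)
    rw [Finset.image_congr (fun t ht => this t ht), Finset.image_id']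

end Counting2

lemma card_PFin_eq_right {n d j : ℕ} [NeZero n] (hd : 1 ≤ d) (hn : 2 * d ≤ n) :
    (PFin n d j).card = n * (((n - d) - d * (j - 1)).choose j) := by
  rw [Finset.card_eq_sum_card_fiberwise (f := Prod.fst) (t := Finset.univ)
    (fun p _ => Finset.mem_univ _)]
  rw [Finset.sum_congr rfl (fun v _ => fiber_fst hd hn v), Finset.sum_const,
    Finset.card_univ, ZMod.card, smul_eq_mul, SFin_card]

/-- For `n ≥ 2d ≥ 2` and `0 ≤ j ≤ ⌊n/(d+1)⌋`, the number `N_j` of independent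
sets of `C_n(1,2,…,d)` with exactly `j` vertices satisfies
`(n - d·j) · N_j = n · choose (n - d·j) j`. -/
theorem circulant_indep_count (n d j : ℕ) (hd : 1 ≤ d) (hn : 2 * d ≤ n)
    (hj : j ≤ n / (d + 1)) :
    (n - d * j) *
        {s : Finset (ZMod n) |
          IsIndepSet (circulantGraph n (Set.Icc 1 d)) ↑s ∧ s.card = j}.ncard =
      n * Nat.choose (n - d * j) j := by
  haveI : NeZero n := ⟨by omega⟩
  classical
  have hdj : d * j + j ≤ n := by
    have h := (Nat.le_div_iff_mul_le (by omega : 0 < d + 1)).1 hj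
    have e : j * (d + 1) = d * j + j := by ring
    omega
  have hncard : {s : Finset (ZMod n) |
      IsIndepSet (circulantGraph n (Set.Icc 1 d)) ↑s ∧ s.card = j}.ncard
      = (IFin n d j).card := by
    rw [← Set.ncard_coe_finset (IFin n d j)]
    congr 1
    ext s
    simp only [Set.mem_setOf_eq, Finset.mem_coe, mem_IFin, indep_iff]
  rw [hncard, mul_comm, ← card_PFin_eq_left hd hn, card_PFin_eq_right hd hn]
  cases j with
  | zero => simp
  | succ k =>
    have e : d * (k + 1) = d * k + d := by ring
    have e2 : d * (k + 1 - 1) = d * k := by simp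
    congr 2
    omega
end

section
/- Let d ≥ 1 and let n be an integer with 2d+3 ≤ n ≤ 3d+2. Then the complement graph of the circulant graph C_n(1,2,...,d) is connected. -/
open MvPolynomial

/-- For `d ≥ 1` and `2d+3 ≤ n ≤ 3d+2`, the complement of `C_n(1,2,…,d)`
is connected. -/
theorem circulant_compl_connected (n d : ℕ) (hd : 1 ≤ d) (h1 : 2 * d + 3 ≤ n)
    (h2 : n ≤ 3 * d + 2) :
    (circulantGraph n (Set.Icc 1 d))ᶜ.Connected := by
  haveI : NeZero n := ⟨by omega⟩
  set G := circulantGraph n (Set.Icc 1 d) with hG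
  have key : ∀ (i : ZMod n) (c : ℕ), d + 1 ≤ c → c + d + 1 ≤ n →
      (Gᶜ).Adj i (i + (c : ZMod n)) := by
    intro i c hc1 hc2
    have hcv : ((c : ZMod n)).val = c := ZMod.val_natCast_of_lt (by omega)
    have hc0 : (c : ZMod n) ≠ 0 := by
      intro h; rw [h, ZMod.val_zero] at hcv; omega
    have hne : i ≠ i + (c : ZMod n) := by
      intro h
      exact hc0 (by linear_combination -h)
    rw [SimpleGraph.compl_adj]
    refine ⟨hne, ?_⟩
    rw [hG, circulantGraph, SimpleGraph.fromRel_adj]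
    rintro ⟨-, hrel | hrel⟩
    · have hsub : i - (i + (c : ZMod n)) = -(c : ZMod n) := by ring
      rw [hsub, ZMod.neg_val, if_neg hc0, hcv] at hrel
      rw [Set.mem_Icc] at hrel
      omega
    · have hsub : (i + (c : ZMod n)) - i = (c : ZMod n) := by ring
      rw [hsub, hcv, Set.mem_Icc] at hrel
      omega
  have step : ∀ i : ZMod n, (Gᶜ).Reachable i (i + 1) := by
    intro i
    have h1 : (Gᶜ).Adj i (i + ((d + 2 : ℕ) : ZMod n)) :=
      key i (d + 2) (by omega) (by omega)
    have h2 : (Gᶜ).Adj (i + 1) ((i + 1) + ((d + 1 : ℕ) : ZMod n)) :=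
      key (i + 1) (d + 1) le_rfl (by omega)
    have he : (i + 1) + ((d + 1 : ℕ) : ZMod n) = i + ((d + 2 : ℕ) : ZMod n) := by
      push_cast; ring
    rw [he] at h2
    exact h1.reachable.trans h2.reachable.symm
  have all : ∀ m : ℕ, (Gᶜ).Reachable 0 ((m : ℕ) : ZMod n) := by
    intro m
    induction m with
    | zero => simpa using SimpleGraph.Reachable.refl (0 : ZMod n)
    | succ k ih =>
      have hs := step ((k : ℕ) : ZMod n)
      have : (((k + 1 : ℕ)) : ZMod n) = ((k : ℕ) : ZMod n) + 1 := by push_cast; ring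
      rw [this]
      exact ih.trans hs
  have pre : (Gᶜ).Preconnected := by
    intro u v
    have hu := all u.val
    have hv := all v.val
    rw [ZMod.natCast_val, ZMod.cast_id] at hu hv
    exact hu.symm.trans hv
  haveI : Nonempty (ZMod n) := ⟨0⟩
  exact SimpleGraph.Connected.mk pre
end

section
/- Let d ≥ 1 and let G = C_{4d+3}(1,2,...,d). For every vertex v of G, the induced subgraph of the complement graph Gᶜ on the set of vertices that are distinct from v and not adjacent to v in G is connected. -/
open MvPolynomial

private lemma cd_cast_sub_val_le (d a b : ℕ) (h : b ≤ a) (ha : a < 4*d+3) :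
    (((a : ZMod (4*d+3))) - b).val = a - b := by
  haveI : NeZero (4*d+3) := ⟨by omega⟩
  rw [← Nat.cast_sub h, ZMod.val_natCast_of_lt (by omega)]

private lemma cd_cast_sub_val_gt (d a b : ℕ) (h : a < b) (hb : b < 4*d+3) :
    (((a : ZMod (4*d+3))) - b).val = 4*d+3 - (b - a) := by
  haveI : NeZero (4*d+3) := ⟨by omega⟩
  have h2 : ((a : ZMod (4*d+3))) - b = -((b - a : ℕ) : ZMod (4*d+3)) := by
    rw [Nat.cast_sub h.le]; ring
  have hne : ((b - a : ℕ) : ZMod (4*d+3)) ≠ 0 := by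
    intro h0
    have := congrArg ZMod.val h0
    rw [ZMod.val_natCast_of_lt (by omega)] at this
    simp at this
    omega
  rw [h2, ZMod.neg_val, if_neg hne, ZMod.val_natCast_of_lt (by omega)]

private lemma cd_compl_adj_iff (d : ℕ) (x y : ZMod (4*d+3)) :
    (circulantGraph (4*d+3) (Set.Icc 1 d))ᶜ.Adj x y ↔
      d+1 ≤ (x-y).val ∧ (x-y).val ≤ 3*d+2 := by
  haveI : NeZero (4*d+3) := ⟨by omega⟩
  have hval : (x - y).val < 4*d+3 := ZMod.val_lt _
  rw [SimpleGraph.compl_adj]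
  simp only [circulantGraph, SimpleGraph.fromRel_adj, Set.mem_Icc]
  by_cases hxy : x = y
  · subst hxy
    simp
  · have hne : x - y ≠ 0 := sub_ne_zero.mpr hxy
    have h0 : (x - y).val ≠ 0 := by
      rwa [Ne, ZMod.val_eq_zero]
    have hyx : (y - x).val = 4*d+3 - (x-y).val := by
      have : y - x = -(x - y) := by ring
      rw [this, ZMod.neg_val, if_neg hne]
    simp only [hxy, Ne, not_false_iff, true_and, ne_eq, not_and, not_or, not_true]
    rw [hyx]
    omega

private lemma cd_mem_iff (d : ℕ) (v w : ZMod (4*d+3)) :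
    (w ≠ v ∧ ¬ (circulantGraph (4*d+3) (Set.Icc 1 d)).Adj v w) ↔
      d+1 ≤ (w-v).val ∧ (w-v).val ≤ 3*d+2 := by
  rw [← cd_compl_adj_iff, SimpleGraph.compl_adj]
  constructor
  · rintro ⟨h1, h2⟩; exact ⟨h1, fun h => h2 h.symm⟩
  · rintro ⟨h1, h2⟩; exact ⟨h1, fun h => h2 h.symm⟩

/-- For `d ≥ 1`, `G = C_{4d+3}(1,2,…,d)` and any vertex `v`, the induced
subgraph of `Gᶜ` on the vertices distinct from and non-adjacent to `v` is connected. -/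
theorem circulant_compl_link_connected (d : ℕ) (hd : 1 ≤ d) (v : ZMod (4 * d + 3)) :
    ((circulantGraph (4 * d + 3) (Set.Icc 1 d))ᶜ.induce
      {w | w ≠ v ∧ ¬ (circulantGraph (4 * d + 3) (Set.Icc 1 d)).Adj v w}).Connected := by
  haveI : NeZero (4*d+3) := ⟨by omega⟩
  set G := circulantGraph (4 * d + 3) (Set.Icc 1 d) with hG
  set S : Set (ZMod (4*d+3)) := {w | w ≠ v ∧ ¬ G.Adj v w} with hS
  have memS : ∀ w : ZMod (4*d+3), w ∈ S ↔ d+1 ≤ (w-v).val ∧ (w-v).val ≤ 3*d+2 :=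
    fun w => cd_mem_iff d v w
  have mem_add : ∀ k : ℕ, k < 4*d+3 → ((v + (k : ZMod (4*d+3))) - v).val = k := by
    intro k hk
    rw [add_sub_cancel_left, ZMod.val_natCast_of_lt hk]
  have hub_mem : v + ((d+1 : ℕ) : ZMod (4*d+3)) ∈ S := by
    rw [memS, mem_add (d+1) (by omega)]
    omega
  have adj_of : ∀ a b : ℕ, a < 4*d+3 → b < 4*d+3 →
      ((d+1 ≤ a - b ∧ a - b ≤ 3*d+2) ∨ (d+1 ≤ b - a ∧ b - a ≤ 3*d+2)) →
      Gᶜ.Adj (v + (a : ZMod (4*d+3))) (v + (b : ZMod (4*d+3))) := by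
    intro a b ha hb h
    have e : (v + (a : ZMod (4*d+3))) - (v + b) = (a : ZMod (4*d+3)) - b := by ring
    rw [hG, cd_compl_adj_iff, e]
    rcases le_or_gt b a with hle | hlt
    · rw [cd_cast_sub_val_le d a b hle ha]; omega
    · rw [cd_cast_sub_val_gt d a b hlt hb]; omega
  have key : ∀ a : ℕ, d+1 ≤ a → a ≤ 3*d+2 → ∀ (ha : v + (a : ZMod (4*d+3)) ∈ S),
      (Gᶜ.induce S).Reachable ⟨v + (a : ZMod (4*d+3)), ha⟩
        ⟨v + ((d+1 : ℕ) : ZMod (4*d+3)), hub_mem⟩ := by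
    intro a ha1 ha2 hmem
    rcases le_or_gt (2*d+2) a with hcase | hcase
    · refine SimpleGraph.Adj.reachable ?_
      exact adj_of a (d+1) (by omega) (by omega) (Or.inl ⟨by omega, by omega⟩)
    · have hmid : v + ((a + d + 1 : ℕ) : ZMod (4*d+3)) ∈ S := by
        rw [memS, mem_add (a+d+1) (by omega)]
        omega
      have h1 : (Gᶜ.induce S).Adj ⟨v + ((a : ℕ) : ZMod (4*d+3)), hmem⟩
          ⟨v + ((a+d+1 : ℕ) : ZMod (4*d+3)), hmid⟩ :=
        adj_of a (a+d+1) (by omega) (by omega) (Or.inr ⟨by omega, by omega⟩)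
      have h2 : (Gᶜ.induce S).Adj ⟨v + ((a+d+1 : ℕ) : ZMod (4*d+3)), hmid⟩
          ⟨v + ((d+1 : ℕ) : ZMod (4*d+3)), hub_mem⟩ :=
        adj_of (a+d+1) (d+1) (by omega) (by omega) (Or.inl ⟨by omega, by omega⟩)
      exact h1.reachable.trans h2.reachable
  rw [SimpleGraph.connected_iff]
  refine ⟨?_, ⟨⟨_, hub_mem⟩⟩⟩
  rintro ⟨u, hu⟩ ⟨w, hw⟩
  have eu : u = v + (((u - v).val : ℕ) : ZMod (4*d+3)) := by
    rw [ZMod.natCast_rightInverse (u - v)]; ring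
  have ew : w = v + (((w - v).val : ℕ) : ZMod (4*d+3)) := by
    rw [ZMod.natCast_rightInverse (w - v)]; ring
  have hu' := (memS u).mp hu
  have hw' := (memS w).mp hw
  have hu2 : v + (((u - v).val : ℕ) : ZMod (4*d+3)) ∈ S := eu ▸ hu
  have hw2 : v + (((w - v).val : ℕ) : ZMod (4*d+3)) ∈ S := ew ▸ hw
  have r1 := key (u - v).val hu'.1 hu'.2 hu2
  have r2 := key (w - v).val hw'.1 hw'.2 hw2
  have e1 : (⟨u, hu⟩ : S) = ⟨v + (((u - v).val : ℕ) : ZMod (4*d+3)), hu2⟩ := Subtype.ext eu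
  have e2 : (⟨w, hw⟩ : S) = ⟨v + (((w - v).val : ℕ) : ZMod (4*d+3)), hw2⟩ := Subtype.ext ew
  rw [e1, e2]
  exact r1.trans r2.symm
end

section
/- Let d ≥ 1 and let G = C_{4d+3}(1,2,...,d). For every integer j with 2d+3 ≤ j ≤ 3d+3, the set {x_1, x_{d+2}, x_j} is a maximal independent set of G, and for every integer i with d+3 ≤ i ≤ 2d+2, the set {x_1, x_i, x_{3d+3}} is a maximal independent set of G. -/
open MvPolynomial

/-- A maximal independent set: an independent set not properly contained in any other
independent set. -/
def IsMaximalIndepSet {V : Type*} (G : SimpleGraph V) (s : Set V) : Prop :=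
  IsIndepSet G s ∧ ∀ t : Set V, IsIndepSet G t → s ⊆ t → s = t


section Helpers

lemma circAdj_iff {n : ℕ} [NeZero n] (d : ℕ) (a b : ZMod n) :
    (circulantGraph n (Set.Icc 1 d)).Adj a b ↔
      a ≠ b ∧ min (a - b).val (n - (a - b).val) ≤ d := by
  rw [circulantGraph, SimpleGraph.fromRel_adj]
  simp only [Set.mem_Icc]
  constructor
  · rintro ⟨hne, h | h⟩
    · exact ⟨hne, h.2⟩
    · refine ⟨hne, ?_⟩
      have h2 : a - b ≠ 0 := sub_ne_zero.mpr hne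
      have h3 : (b - a).val = n - (a - b).val := by
        have h1 : b - a = -(a - b) := by ring
        rw [h1, ZMod.neg_val]
        simp [h2]
      have h4 : (a - b).val < n := ZMod.val_lt _
      have h5 : (a - b).val ≠ 0 := by
        simpa [ZMod.val_eq_zero] using h2
      rw [h3] at h
      omega
  · rintro ⟨hne, h⟩
    refine ⟨hne, Or.inl ⟨?_, h⟩⟩
    have h2 : a - b ≠ 0 := sub_ne_zero.mpr hne
    have h4 : (a - b).val < n := ZMod.val_lt _
    have h5 : (a - b).val ≠ 0 := by
      simpa [ZMod.val_eq_zero] using h2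
    omega

lemma val_sub_of_le {n a b : ℕ} [NeZero n] (hba : b ≤ a) (ha : a < n) :
    ((a : ZMod n) - (b : ZMod n)).val = a - b := by
  rw [← Nat.cast_sub hba, ZMod.val_cast_of_lt (by omega)]

lemma val_sub_of_lt {n a b : ℕ} [NeZero n] (hab : a < b) (hb : b < n) :
    ((a : ZMod n) - (b : ZMod n)).val = n - (b - a) := by
  have h1 : (a : ZMod n) - (b : ZMod n) = -(((b - a : ℕ) : ZMod n)) := by
    rw [Nat.cast_sub hab.le]; ring
  have h2 : ((b - a : ℕ) : ZMod n) ≠ 0 := by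
    rw [Ne, ZMod.natCast_eq_zero_iff]
    intro hdvd
    have := Nat.le_of_dvd (by omega) hdvd
    omega
  rw [h1, ZMod.neg_val, if_neg h2, ZMod.val_cast_of_lt (by omega)]

lemma natCast_zmod_inj {n a b : ℕ} [NeZero n] (ha : a < n) (hb : b < n)
    (h : (a : ZMod n) = (b : ZMod n)) : a = b := by
  have := congrArg ZMod.val h
  rwa [ZMod.val_cast_of_lt ha, ZMod.val_cast_of_lt hb] at this

lemma circAdj_iff_nat {n : ℕ} [NeZero n] (d a b : ℕ) (ha : a < n) (hb : b < n) :
    (circulantGraph n (Set.Icc 1 d)).Adj (a : ZMod n) (b : ZMod n) ↔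
      a ≠ b ∧ min (a - b + (b - a)) (n - (a - b + (b - a))) ≤ d := by
  rw [circAdj_iff]
  have hcast : ((a : ZMod n) = (b : ZMod n)) ↔ a = b :=
    ⟨natCast_zmod_inj ha hb, fun h => by rw [h]⟩
  rcases le_or_gt b a with h | h
  · rw [val_sub_of_le h ha, ne_eq, hcast]
    constructor <;> rintro ⟨h1, h2⟩ <;> exact ⟨h1, by omega⟩
  · rw [val_sub_of_lt h hb, ne_eq, hcast]
    constructor <;> rintro ⟨h1, h2⟩ <;> exact ⟨h1, by omega⟩

lemma max_indep_of_dominating {V : Type*} (G : SimpleGraph V) (s : Set V)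
    (hi : IsIndepSet G s) (hdom : ∀ w, w ∉ s → ∃ u ∈ s, G.Adj u w) :
    IsMaximalIndepSet G s := by
  refine ⟨hi, fun t ht hst => ?_⟩
  refine hst.antisymm fun w hw => ?_
  by_contra hws
  obtain ⟨u, hus, hadj⟩ := hdom w hws
  exact ht (hst hus) hw (fun h => hws (h ▸ hus)) hadj

end Helpers

/-- For `d ≥ 1` and `G = C_{4d+3}(1,2,…,d)`: for `2d+3 ≤ j ≤ 3d+3` the set
`{x_1, x_{d+2}, x_j}` is a maximal independent set of `G`, and for `d+3 ≤ i ≤ 2d+2` the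
set `{x_1, x_i, x_{3d+3}}` is a maximal independent set of `G`. -/
theorem circulant_4d3_maximal_indep_sets (d : ℕ) (hd : 1 ≤ d) :
    (∀ j : ℕ, 2 * d + 3 ≤ j → j ≤ 3 * d + 3 →
      IsMaximalIndepSet (circulantGraph (4 * d + 3) (Set.Icc 1 d))
        {((1 : ℕ) : ZMod (4 * d + 3)), ((d + 2 : ℕ) : ZMod (4 * d + 3)),
          ((j : ℕ) : ZMod (4 * d + 3))}) ∧
    (∀ i : ℕ, d + 3 ≤ i → i ≤ 2 * d + 2 →
      IsMaximalIndepSet (circulantGraph (4 * d + 3) (Set.Icc 1 d))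
        {((1 : ℕ) : ZMod (4 * d + 3)), ((i : ℕ) : ZMod (4 * d + 3)),
          ((3 * d + 3 : ℕ) : ZMod (4 * d + 3))}) := by
  haveI : NeZero (4 * d + 3) := ⟨by omega⟩
  constructor
  · intro j hj1 hj2
    apply max_indep_of_dominating
    · intro u hu v hv huv
      simp only [Set.mem_insert_iff, Set.mem_singleton_iff] at hu hv
      rcases hu with rfl | rfl | rfl <;> rcases hv with rfl | rfl | rfl <;>
        first
          | exact absurd rfl huv
          | (rw [circAdj_iff_nat d _ _ (by omega) (by omega)]; rintro ⟨-, h⟩; omega)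
    · intro w hw
      have hmlt : w.val < 4 * d + 3 := ZMod.val_lt w
      have hwm : ((w.val : ℕ) : ZMod (4 * d + 3)) = w := ZMod.natCast_rightInverse w
      set m := w.val with hmdef
      rw [← hwm] at hw ⊢
      simp only [Set.mem_insert_iff, Set.mem_singleton_iff, not_or] at hw
      obtain ⟨hw1, hw2, hw3⟩ := hw
      have h1 : m ≠ 1 := fun h => hw1 (by rw [h])
      have h2 : m ≠ d + 2 := fun h => hw2 (by rw [h])
      have h3 : m ≠ j := fun h => hw3 (by rw [h])
      rcases (show m ≤ d + 1 ∨ (2 ≤ m ∧ m ≤ 2 * d + 2) ∨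
          (j - d ≤ m ∧ m ≤ j + d) ∨ 3 * d + 4 ≤ m by omega) with h | h | h | h
      · exact ⟨_, Set.mem_insert_iff.mpr (Or.inl rfl),
          (circAdj_iff_nat d 1 m (by omega) hmlt).mpr ⟨by omega, by omega⟩⟩
      · exact ⟨_, Set.mem_insert_iff.mpr (Or.inr (Or.inl rfl)),
          (circAdj_iff_nat d (d + 2) m (by omega) hmlt).mpr ⟨by omega, by omega⟩⟩
      · exact ⟨_, Set.mem_insert_iff.mpr (Or.inr (Or.inr rfl)),
          (circAdj_iff_nat d j m (by omega) hmlt).mpr ⟨by omega, by omega⟩⟩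
      · exact ⟨_, Set.mem_insert_iff.mpr (Or.inl rfl),
          (circAdj_iff_nat d 1 m (by omega) hmlt).mpr ⟨by omega, by omega⟩⟩
  · intro i hi1 hi2
    apply max_indep_of_dominating
    · intro u hu v hv huv
      simp only [Set.mem_insert_iff, Set.mem_singleton_iff] at hu hv
      rcases hu with rfl | rfl | rfl <;> rcases hv with rfl | rfl | rfl <;>
        first
          | exact absurd rfl huv
          | (rw [circAdj_iff_nat d _ _ (by omega) (by omega)]; rintro ⟨-, h⟩; omega)
    · intro w hw
      have hmlt : w.val < 4 * d + 3 := ZMod.val_lt w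
      have hwm : ((w.val : ℕ) : ZMod (4 * d + 3)) = w := ZMod.natCast_rightInverse w
      set m := w.val with hmdef
      rw [← hwm] at hw ⊢
      simp only [Set.mem_insert_iff, Set.mem_singleton_iff, not_or] at hw
      obtain ⟨hw1, hw2, hw3⟩ := hw
      have h1 : m ≠ 1 := fun h => hw1 (by rw [h])
      have h2 : m ≠ i := fun h => hw2 (by rw [h])
      have h3 : m ≠ 3 * d + 3 := fun h => hw3 (by rw [h])
      rcases (show m ≤ d + 1 ∨ (i - d ≤ m ∧ m ≤ i + d) ∨
          2 * d + 3 ≤ m by omega) with h | h | h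
      · exact ⟨_, Set.mem_insert_iff.mpr (Or.inl rfl),
          (circAdj_iff_nat d 1 m (by omega) hmlt).mpr ⟨by omega, by omega⟩⟩
      · exact ⟨_, Set.mem_insert_iff.mpr (Or.inr (Or.inl rfl)),
          (circAdj_iff_nat d i m (by omega) hmlt).mpr ⟨by omega, by omega⟩⟩
      · exact ⟨_, Set.mem_insert_iff.mpr (Or.inr (Or.inr rfl)),
          (circAdj_iff_nat d (3 * d + 3) m (by omega) hmlt).mpr ⟨by omega, by omega⟩⟩
end
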